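/- If a connected graph G is (s,s−1)-dismantlable for an integer s ≥ 1, then G does not contain any finite locally s-isometric subgraph. -/

import Mathlib

open SimpleGraph

variable {V : Type*}

/-- The ball of (real) radius `r` around `v` in `G` (w.r.t. the graph distance). -/
def gBall (G : SimpleGraph V) (v : V) (r : ℝ) : Set V :=
  {x : V | (G.dist v x : ℝ) ≤ r}

/-- The interval `I(u,v)`: vertices lying on shortest `(u,v)`-paths. -/
def gInterval (G : SimpleGraph V) (u v : V) : Set V :=
  {x : V | G.dist u x + G.dist x v = G.dist u v}

/-- Gromov `δ`-hyperbolicity via the four-point condition. -/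
def IsHyperbolic {W : Type*} (G : SimpleGraph W) (δ : ℝ) : Prop :=
  ∀ u v x y : W,
    (G.dist u v : ℝ) + (G.dist x y : ℝ) ≤
      max ((G.dist u x : ℝ) + (G.dist v y : ℝ)) ((G.dist u y : ℝ) + (G.dist v x : ℝ)) + 2 * δ

/-- `(s,s')*`-dismantlability: there is a well-order `lt` on the vertices such that every
vertex `v` which is not the least element is eliminated by some earlier vertex `u`,
i.e. `B_s(v) ∩ X_v ⊆ B_{s'}(u)` where `X_v = {w : w ⪯ v}`. -/
def StarDismantlable (G : SimpleGraph V) (s s' : ℝ) : Prop :=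
  ∃ lt : V → V → Prop, IsWellOrder V lt ∧
    ∀ v : V, (∃ w : V, lt w v) →
      ∃ u : V, lt u v ∧ gBall G v s ∩ {w : V | lt w v ∨ w = v} ⊆ gBall G u s'

/-- The ball of radius `r` around `v` in the subgraph of `G` induced on `V \ {u}`. -/
def gBallRemove (G : SimpleGraph V) (u v : V) (r : ℝ) : Set V :=
  {x : V | ∃ (hv : v ∈ {w : V | w ≠ u}) (hx : x ∈ {w : V | w ≠ u}),
    (G.induce {w : V | w ≠ u}).Reachable ⟨v, hv⟩ ⟨x, hx⟩ ∧
    ((G.induce {w : V | w ≠ u}).dist ⟨v, hv⟩ ⟨x, hx⟩ : ℝ) ≤ r}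

/-- `(s,s')`-dismantlability: there is a well-order `lt` on the vertices such that every
vertex `v` which is not the least element is eliminated by an earlier vertex `u`, i.e.
`B_s(v, G−u) ∩ X_v ⊆ B_{s'}(u)`. -/
def Dismantlable (G : SimpleGraph V) (s s' : ℝ) : Prop :=
  ∃ lt : V → V → Prop, IsWellOrder V lt ∧
    ∀ v : V, (∃ w : V, lt w v) →
      ∃ u : V, lt u v ∧ gBallRemove G u v s ∩ {w : V | lt w v ∨ w = v} ⊆ gBall G u s'

/-- Weak modularity: the triangle and quadrangle conditions. -/
def WeaklyModular (G : SimpleGraph V) : Prop :=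
  (∀ u v w : V, G.dist v w = 1 → 1 < G.dist u v → G.dist u v = G.dist u w →
    ∃ x : V, G.Adj v x ∧ G.Adj w x ∧ G.dist u x + 1 = G.dist u v) ∧
  (∀ u v w z : V, G.dist v z = 1 → G.dist w z = 1 → G.dist v w = 2 →
    2 ≤ G.dist u v → G.dist u v = G.dist u w → G.dist u z = G.dist u v + 1 →
    ∃ x : V, G.Adj v x ∧ G.Adj w x ∧ G.dist u x + 1 = G.dist u v)

/-- `u`, `v`, `w` form a metric triangle: the pairwise intervals intersect only in the
common end-vertices. -/
def MetricTriangle (G : SimpleGraph V) (u v w : V) : Prop :=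
  gInterval G u v ∩ gInterval G v w = {v} ∧
  gInterval G v w ∩ gInterval G w u = {w} ∧
  gInterval G w u ∩ gInterval G u v = {u}

/-- A walk of `G` is a geodesic if its length equals the distance between its endpoints. -/
def IsGeodesicWalk (G : SimpleGraph V) {x y : V} (p : G.Walk x y) : Prop :=
  p.length = G.dist x y

/-- `H` is a locally `s`-isometric subgraph of `G`: `H` contains a collection `P` of
geodesics of `G` such that every vertex `v` of `H` lies on some geodesic of `P` whose two
endpoints are both at distance at least `s` from `v` in `G`. -/
def LocallyIsometricIn (G : SimpleGraph V) (H : G.Subgraph) (s : ℕ) : Prop :=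
  H.verts.Nonempty ∧
  ∃ P : Set (Σ x y : V, G.Walk x y),
    (∀ p ∈ P, IsGeodesicWalk G p.2.2 ∧
      (∀ v ∈ p.2.2.support, v ∈ H.verts) ∧
      (∀ e ∈ p.2.2.edges, e ∈ H.edgeSet)) ∧
    (∀ v ∈ H.verts, ∃ p ∈ P, v ∈ p.2.2.support ∧
      s ≤ G.dist v p.1 ∧ s ≤ G.dist v p.2.1)

/-- max of finite set under a well order -/
lemma myExistsMax {α : Type*} (r : α → α → Prop) (hwo : IsWellOrder α r) {s : Set α}
    (hs : s.Finite) (hne : s.Nonempty) : ∃ v ∈ s, ∀ w ∈ s, r w v ∨ w = v := by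
  haveI := hwo
  refine Set.Finite.induction_on (motive := fun s _ => s.Nonempty → ∃ v ∈ s, ∀ w ∈ s, r w v ∨ w = v)
    s hs (fun hne => absurd hne (by simp)) ?_ hne
  intro a t hat htf ih _
  rcases t.eq_empty_or_nonempty with rfl | htne
  · exact ⟨a, Set.mem_insert _ _, by intro w hw; simp at hw; exact Or.inr hw⟩
  · obtain ⟨v, hv, hmax⟩ := ih htne
    rcases trichotomous_of r a v with h | h | h
    · refine ⟨v, Set.mem_insert_of_mem _ hv, ?_⟩
      intro w hw
      rcases hw with rfl | hw
      · exact Or.inl h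
      · exact hmax w hw
    · refine ⟨v, Set.mem_insert_of_mem _ hv, ?_⟩
      intro w hw
      rcases hw with rfl | hw
      · exact Or.inr h
      · exact hmax w hw
    · refine ⟨a, Set.mem_insert _ _, ?_⟩
      intro w hw
      rcases hw with rfl | hw
      · exact Or.inr rfl
      · rcases hmax w hw with h' | rfl
        · exact Or.inl (trans_of r h' h)
        · exact Or.inl h

/-- subwalk between indices -/
lemma mySubwalk {G : SimpleGraph V} {x y : V} (p : G.Walk x y) :
    ∀ i j : ℕ, i ≤ j → j ≤ p.length →
      ∃ q : G.Walk (p.getVert i) (p.getVert j), q.length = j - i ∧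
        ∀ w ∈ q.support, ∃ t, i ≤ t ∧ t ≤ j ∧ p.getVert t = w := by
  induction p with
  | nil =>
    intro i j hij hj
    simp only [Walk.length_nil, Nat.le_zero] at hj
    subst hj
    simp only [Nat.le_zero] at hij
    subst hij
    exact ⟨Walk.nil, rfl, by intro w hw; simp at hw; exact ⟨0, le_rfl, le_rfl, hw.symm⟩⟩
  | @cons a c b adj q ih =>
    intro i j hij hj
    match i, j with
    | 0, 0 =>
      refine ⟨Walk.nil, rfl, ?_⟩
      intro w hw; simp at hw; exact ⟨0, le_rfl, le_rfl, hw.symm⟩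
    | 0, (j+1) =>
      obtain ⟨q', hl, hsup⟩ := ih 0 j (Nat.zero_le _) (by simpa using hj)
      refine ⟨(Walk.cons adj (q'.copy (q.getVert_zero) rfl)).copy (Walk.getVert_zero _).symm
          (Walk.getVert_cons_succ q adj).symm,
          by rw [Walk.length_copy, Walk.length_cons, Walk.length_copy, hl]; omega, ?_⟩
      intro w hw
      simp only [Walk.support_copy, Walk.support_cons, List.mem_cons] at hw
      rcases hw with rfl | hw
      · exact ⟨0, le_rfl, Nat.zero_le _, by simp⟩
      · obtain ⟨t, ht0, htj, hgv⟩ := hsup w hw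
        exact ⟨t + 1, Nat.le_add_left _ _, by omega, by rw [Walk.getVert_cons_succ]; exact hgv⟩
    | (i+1), (j+1) =>
      obtain ⟨q', hl, hsup⟩ := ih i j (by omega) (by simpa using hj)
      refine ⟨q'.copy (by rw [Walk.getVert_cons_succ]) (by rw [Walk.getVert_cons_succ]),
        by simpa using hl, ?_⟩
      intro w hw
      simp only [Walk.support_copy] at hw
      obtain ⟨t, hti, htj, hgv⟩ := hsup w hw
      exact ⟨t + 1, by omega, by omega, by rw [Walk.getVert_cons_succ]; exact hgv⟩

/-- distances along a geodesic -/
lemma myDistGetVert {G : SimpleGraph V} (hG : G.Connected) {x y : V} (p : G.Walk x y)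
    (hp : p.length = G.dist x y) {i j : ℕ} (hij : i ≤ j) (hj : j ≤ p.length) :
    G.dist (p.getVert i) (p.getVert j) = j - i := by
  obtain ⟨q, hql, -⟩ := mySubwalk p i j hij hj
  have h1 : G.dist (p.getVert i) (p.getVert j) ≤ j - i := hql ▸ SimpleGraph.dist_le q
  obtain ⟨q0, hq0, -⟩ := mySubwalk p 0 i (Nat.zero_le _) (le_trans hij hj)
  obtain ⟨q2, hq2, -⟩ := mySubwalk p j p.length hj le_rfl
  have h2 : G.dist x (p.getVert i) ≤ i := by
    have := SimpleGraph.dist_le (q0.copy (p.getVert_zero) rfl)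
    simp only [Walk.length_copy] at this; omega
  have h3 : G.dist (p.getVert j) y ≤ p.length - j := by
    have := SimpleGraph.dist_le (q2.copy rfl (p.getVert_length))
    simp only [Walk.length_copy] at this; omega
  have htr1 := hG.dist_triangle (u := x) (v := p.getVert i) (w := y)
  have htr2 := hG.dist_triangle (u := p.getVert i) (v := p.getVert j) (w := y)
  omega

/-- lifting a walk avoiding u to the induced graph -/
lemma myLiftWalk {G : SimpleGraph V} {u : V} {a b : V} (p : G.Walk a b) (hu : u ∉ p.support) :
    ∃ (ha : a ∈ {w : V | w ≠ u}) (hb : b ∈ {w : V | w ≠ u})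
      (q : (G.induce {w : V | w ≠ u}).Walk ⟨a, ha⟩ ⟨b, hb⟩), q.length = p.length := by
  induction p with
  | nil =>
    rename_i w
    have hw : w ∈ {z : V | z ≠ u} := fun h => hu (by simp [Walk.support_nil, h])
    exact ⟨hw, hw, Walk.nil, rfl⟩
  | @cons a c b adj q ih =>
    simp only [Walk.support_cons, List.mem_cons, not_or] at hu
    obtain ⟨hau, huq⟩ := hu
    obtain ⟨hc, hb, q', hl⟩ := ih huq
    have hau' : a ∈ {w : V | w ≠ u} := fun h => hau h.symm
    have hadj : (G.induce {w : V | w ≠ u}).Adj ⟨a, hau'⟩ ⟨c, hc⟩ := by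
      simp only [comap_adj, Function.Embedding.coe_subtype]
      exact adj
    exact ⟨hau', hb, Walk.cons hadj q', by simp [hl]⟩

theorem statement7 (V : Type*) (G : SimpleGraph V) (hG : G.Connected)
    (s : ℕ) (hs : 1 ≤ s)
    (hd : Dismantlable G (s : ℝ) ((s : ℝ) - 1)) :
    ¬ ∃ H : G.Subgraph, H.verts.Finite ∧ LocallyIsometricIn G H s := by
  rintro ⟨H, hFin, hHne, P, hP, hcov⟩
  obtain ⟨lt, hwo, hdis⟩ := hd
  haveI := hwo
  obtain ⟨v, hvH, hmax⟩ := myExistsMax lt hwo hFin hHne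
  obtain ⟨⟨x, y, p⟩, hpP, hvsup, hvx, hvy⟩ := hcov v hvH
  obtain ⟨hgeo, hsupH, -⟩ := hP _ hpP
  dsimp only at hvsup hvx hvy hgeo hsupH
  have hgeo' : p.length = G.dist x y := hgeo
  by_cases hleast : ∃ w, lt w v
  swap
  · have hx : x ∈ H.verts := hsupH x p.start_mem_support
    have hxv : x = v := by
      rcases hmax x hx with h | h
      · exact absurd ⟨x, h⟩ hleast
      · exact h
    rw [hxv, SimpleGraph.dist_self] at hvx
    omega
  obtain ⟨u, hlt, hsub⟩ := hdis v hleast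
  have hune : u ≠ v := fun h => (irrefl_of lt v) (h ▸ hlt)
  obtain ⟨k, hk, hkle⟩ := Walk.mem_support_iff_exists_getVert.mp hvsup
  have hxvd : G.dist x v = k := by
    have := myDistGetVert hG p hgeo' (Nat.zero_le k) hkle
    rw [p.getVert_zero, hk] at this
    omega
  have hsk : s ≤ k := by
    rw [SimpleGraph.dist_comm, hxvd] at hvx; exact hvx
  have hvyd : G.dist v y = p.length - k := by
    have := myDistGetVert hG p hgeo' hkle (le_refl p.length)
    rwa [p.getVert_length, hk] at this
  have hks : k + s ≤ p.length := by
    rw [hvyd] at hvy; omega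
  have hXv : ∀ w ∈ p.support, lt w v ∨ w = v := fun w hw => hmax w (hsupH w hw)
  have dab : G.dist (p.getVert (k - s)) (p.getVert (k + s)) = (k + s) - (k - s) :=
    myDistGetVert hG p hgeo' (by omega) hks
  by_cases hR : ∃ t, k ≤ t ∧ t ≤ k + s ∧ p.getVert t = u
  · by_cases hL : ∃ t, k - s ≤ t ∧ t ≤ k ∧ p.getVert t = u
    · obtain ⟨t, ht1, ht2, ht3⟩ := hR
      obtain ⟨t', ht1', ht2', ht3'⟩ := hL
      have htne : t ≠ k := fun h => hune (by rw [← ht3, h, hk])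
      have htne' : t' ≠ k := fun h => hune (by rw [← ht3', h, hk])
      have d1 : G.dist (p.getVert (k - s)) u = t' - (k - s) := by
        have := myDistGetVert hG p hgeo' ht1' (le_trans ht2' hkle)
        rwa [ht3'] at this
      have d2 : G.dist u (p.getVert (k + s)) = (k + s) - t := by
        have := myDistGetVert hG p hgeo' ht2 (by omega)
        rwa [ht3] at this
      have tri := hG.dist_triangle (u := p.getVert (k - s)) (v := u) (w := p.getVert (k + s))
      omega
    · obtain ⟨q, hql, hqsup⟩ := mySubwalk p (k - s) k (by omega) hkle
      have hu : u ∉ ((q.copy rfl hk).reverse).support := by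
        intro hu
        rw [Walk.support_reverse, List.mem_reverse, Walk.support_copy] at hu
        exact hL (hqsup u hu)
      obtain ⟨hv', ha', q', hq'l⟩ := myLiftWalk ((q.copy rfl hk).reverse) hu
      have haBall : p.getVert (k - s) ∈ gBallRemove G u v (s : ℝ) := by
        refine ⟨hv', ha', q'.reachable, ?_⟩
        have h1 : (G.induce {w : V | w ≠ u}).dist ⟨v, hv'⟩ ⟨p.getVert (k - s), ha'⟩ ≤ s := by
          have := SimpleGraph.dist_le q'
          rw [hq'l] at this
          simp only [Walk.length_reverse, Walk.length_copy] at this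
          omega
        exact_mod_cast h1
      have haX : lt (p.getVert (k - s)) v ∨ p.getVert (k - s) = v := hXv _
        (Walk.mem_support_iff_exists_getVert.mpr ⟨k - s, rfl, by omega⟩)
      have hua : G.dist u (p.getVert (k - s)) + 1 ≤ s := by
        have h3 : (G.dist u (p.getVert (k - s)) : ℝ) ≤ (s : ℝ) - 1 := hsub ⟨haBall, haX⟩
        have h2 : (G.dist u (p.getVert (k - s)) : ℝ) + 1 ≤ (s : ℝ) := by linarith
        exact_mod_cast h2
      obtain ⟨t, ht1, ht2, ht3⟩ := hR
      have htne : t ≠ k := fun h => hune (by rw [← ht3, h, hk])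
      have d1 : G.dist (p.getVert (k - s)) u = t - (k - s) := by
        have := myDistGetVert hG p hgeo' (i := k - s) (j := t) (by omega) (by omega)
        rwa [ht3] at this
      have hc1 : G.dist (p.getVert (k - s)) u = G.dist u (p.getVert (k - s)) :=
        SimpleGraph.dist_comm
      omega
  · obtain ⟨q, hql, hqsup⟩ := mySubwalk p k (k + s) (by omega) hks
    have hu : u ∉ (q.copy hk rfl).support := by
      intro hu
      rw [Walk.support_copy] at hu
      exact hR (hqsup u hu)
    obtain ⟨hv', hb', q', hq'l⟩ := myLiftWalk (q.copy hk rfl) hu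
    have hbBall : p.getVert (k + s) ∈ gBallRemove G u v (s : ℝ) := by
      refine ⟨hv', hb', q'.reachable, ?_⟩
      have h1 : (G.induce {w : V | w ≠ u}).dist ⟨v, hv'⟩ ⟨p.getVert (k + s), hb'⟩ ≤ s := by
        have := SimpleGraph.dist_le q'
        rw [hq'l] at this
        simp only [Walk.length_copy] at this
        omega
      exact_mod_cast h1
    have hbX : lt (p.getVert (k + s)) v ∨ p.getVert (k + s) = v := hXv _
      (Walk.mem_support_iff_exists_getVert.mpr ⟨k + s, rfl, hks⟩)
    have hub : G.dist u (p.getVert (k + s)) + 1 ≤ s := by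
      have h3 : (G.dist u (p.getVert (k + s)) : ℝ) ≤ (s : ℝ) - 1 := hsub ⟨hbBall, hbX⟩
      have h2 : (G.dist u (p.getVert (k + s)) : ℝ) + 1 ≤ (s : ℝ) := by linarith
      exact_mod_cast h2
    by_cases hL : ∃ t, k - s ≤ t ∧ t ≤ k ∧ p.getVert t = u
    · obtain ⟨t', ht1', ht2', ht3'⟩ := hL
      have htne' : t' ≠ k := fun h => hune (by rw [← ht3', h, hk])
      have d2 : G.dist u (p.getVert (k + s)) = (k + s) - t' := by
        have := myDistGetVert hG p hgeo' (le_trans ht2' (by omega)) hks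
        rwa [ht3'] at this
      omega
    · obtain ⟨q2, hq2l, hq2sup⟩ := mySubwalk p (k - s) k (by omega) hkle
      have hu2 : u ∉ ((q2.copy rfl hk).reverse).support := by
        intro hu2
        rw [Walk.support_reverse, List.mem_reverse, Walk.support_copy] at hu2
        exact hL (hq2sup u hu2)
      obtain ⟨hv2', ha', q2', hq2'l⟩ := myLiftWalk ((q2.copy rfl hk).reverse) hu2
      have haBall : p.getVert (k - s) ∈ gBallRemove G u v (s : ℝ) := by
        refine ⟨hv2', ha', q2'.reachable, ?_⟩
        have h1 : (G.induce {w : V | w ≠ u}).dist ⟨v, hv2'⟩ ⟨p.getVert (k - s), ha'⟩ ≤ s := by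
          have := SimpleGraph.dist_le q2'
          rw [hq2'l] at this
          simp only [Walk.length_reverse, Walk.length_copy] at this
          omega
        exact_mod_cast h1
      have haX : lt (p.getVert (k - s)) v ∨ p.getVert (k - s) = v := hXv _
        (Walk.mem_support_iff_exists_getVert.mpr ⟨k - s, rfl, by omega⟩)
      have hua : G.dist u (p.getVert (k - s)) + 1 ≤ s := by
        have h3 : (G.dist u (p.getVert (k - s)) : ℝ) ≤ (s : ℝ) - 1 := hsub ⟨haBall, haX⟩
        have h2 : (G.dist u (p.getVert (k - s)) : ℝ) + 1 ≤ (s : ℝ) := by linarith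
        exact_mod_cast h2
      have tri := hG.dist_triangle (u := p.getVert (k - s)) (v := u) (w := p.getVert (k + s))
      have hc1 : G.dist (p.getVert (k - s)) u = G.dist u (p.getVert (k - s)) :=
        SimpleGraph.dist_comm
      omega
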